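/- Let I be a monomial ideal generated in a single degree d, a-determined, with minimal generators f_1,...,f_ν. Then the toric K-algebras K[f_1 t,...,f_ν t] and K[\hat{f}_1 t,...,\hat{f}_ν t] (subalgebras of R[t]) are isomorphic as K-algebras, via the map sending f_i t to \hat{f}_i t, where \hat{f}_i = x^a/f_i. -/

import Mathlib

open MvPolynomial Finsupp

noncomputable section SpecialFiberAux



def ioz (n : ℕ) : (Fin n →₀ ℕ) →+ (Fin n →₀ ℤ) :=
  Finsupp.mapRange.addMonoidHom (Nat.castAddMonoidHom ℤ)

def iM (n : ℕ) : (Option (Fin n) →₀ ℕ) →+ ((Fin n →₀ ℤ) × ℕ) where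
  toFun u := (ioz n u.some, u none)
  map_zero' := by simp
  map_add' u v := by simp [Finsupp.some_add, Prod.ext_iff]

lemma ioz_inj (n : ℕ) : Function.Injective (ioz n) :=
  Finsupp.mapRange_injective _ (map_zero _) Nat.cast_injective

lemma iM_inj (n : ℕ) : Function.Injective (iM n) := by
  intro u v h
  rw [Prod.ext_iff] at h
  have h1 := ioz_inj n h.1
  ext (_ | i)
  · exact h.2
  · exact DFunLike.congr_fun h1 i

/-- the dualizing automorphism (m, j) ↦ (j•a - m, j) -/
def tau {n : ℕ} (a : Fin n →₀ ℤ) : ((Fin n →₀ ℤ) × ℕ) ≃+ ((Fin n →₀ ℤ) × ℕ) where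
  toFun p := (p.2 • a - p.1, p.2)
  invFun p := (p.2 • a - p.1, p.2)
  left_inv p := by simp
  right_inv p := by simp
  map_add' p q := by
    simp only [Prod.snd_add, Prod.fst_add, add_smul, Prod.mk_add_mk, Prod.mk.injEq]
    exact ⟨by abel, trivial⟩

/-- the embedding of `R[t]` into the big monoid algebra -/
def Phi (K : Type*) [Field K] (n : ℕ) :
    Polynomial (MvPolynomial (Fin n) K) →ₐ[K] AddMonoidAlgebra K ((Fin n →₀ ℤ) × ℕ) :=
  (AddMonoidAlgebra.mapDomainAlgHom K K (iM n)).comp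
    (MvPolynomial.optionEquivLeft K (Fin n)).symm.toAlgHom



section Comp
variable (K : Type*) [Field K] {n : ℕ}

lemma optionEquivLeft_monomial (m : Fin n →₀ ℕ) :
    MvPolynomial.optionEquivLeft K (Fin n)
        (monomial (Finsupp.mapDomain some m + Finsupp.single none 1) (1 : K)) =
      Polynomial.C (monomial m 1) * Polynomial.X := by
  rw [monomial_add_single, pow_one]
  rw [← rename_monomial, map_mul, optionEquivLeft_X_none]
  congr 1
  rw [MvPolynomial.optionEquivLeft_apply, aeval_rename]
  have : ((fun o : Option (Fin n) => o.elim Polynomial.X fun s => Polynomial.C (X s)) ∘ some)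
      = fun s : Fin n =>
        Polynomial.CAlgHom (R := K) (A := MvPolynomial (Fin n) K) (X s) := rfl
  rw [this, ← MvPolynomial.comp_aeval, AlgHom.comp_apply, aeval_X_left_apply]
  rfl

lemma iM_m' (m : Fin n →₀ ℕ) :
    iM n (Finsupp.mapDomain some m + Finsupp.single none 1) = (ioz n m, 1) := by
  rw [map_add]
  have h1 : iM n (Finsupp.mapDomain some m) = (ioz n m, 0) := by
    simp only [iM, AddMonoidHom.coe_mk, ZeroHom.coe_mk]
    congr 1
    · congr 1
      ext i
      rw [Finsupp.some_apply, Finsupp.mapDomain_apply (Option.some_injective _)]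
    · exact Finsupp.mapDomain_notin_range _ _ (by simp)
  have h2 : iM n (Finsupp.single none 1) = (0, 1) := by
    simp only [iM, AddMonoidHom.coe_mk, ZeroHom.coe_mk]
    congr 1
    · have : (Finsupp.single (α := Option (Fin n)) none (1:ℕ)).some = 0 := by
        ext i; simp [Finsupp.some_apply]
      rw [this, map_zero]
    · simp
  rw [h1, h2]
  simp

lemma Phi_gen (m : Fin n →₀ ℕ) :
    Phi K n (Polynomial.C (monomial m 1) * Polynomial.X) =
      AddMonoidAlgebra.single ((ioz n m, 1) : (Fin n →₀ ℤ) × ℕ) (1 : K) := by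
  have h := optionEquivLeft_monomial K m
  have h' : (MvPolynomial.optionEquivLeft K (Fin n)).symm
      (Polynomial.C (monomial m 1) * Polynomial.X)
      = monomial (Finsupp.mapDomain some m + Finsupp.single none 1) (1 : K) := by
    rw [← h, AlgEquiv.symm_apply_apply]
  calc Phi K n (Polynomial.C (monomial m 1) * Polynomial.X)
      = AddMonoidAlgebra.mapDomainAlgHom K K (iM n)
          ((MvPolynomial.optionEquivLeft K (Fin n)).symm
            (Polynomial.C (monomial m 1) * Polynomial.X)) := rfl
    _ = AddMonoidAlgebra.single ((ioz n m, 1) : (Fin n →₀ ℤ) × ℕ) (1 : K) := by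
        rw [h', AddMonoidAlgebra.mapDomainAlgHom_apply, ← MvPolynomial.single_eq_monomial,
          AddMonoidAlgebra.mapDomain_single, iM_m']

end Comp

section Main
variable (K : Type*) [Field K] {n : ℕ}

lemma tau_gen {a m : Fin n →₀ ℕ} (h : m ≤ a) :
    tau (ioz n a) ((ioz n m, 1) : (Fin n →₀ ℤ) × ℕ) = (ioz n (a - m), 1) := by
  simp only [tau, AddEquiv.coe_mk, Equiv.coe_fn_mk, one_smul]
  refine Prod.ext ?_ rfl
  ext i
  simp only [Finsupp.sub_apply, ioz, Finsupp.mapRange.addMonoidHom_apply,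
    Finsupp.mapRange_apply, Nat.coe_castAddMonoidHom, Finsupp.tsub_apply]
  have := Finsupp.le_def.mp h i
  omega

lemma Phi_inj : Function.Injective (Phi K n) := by
  have h1 : Function.Injective
      (AddMonoidAlgebra.mapDomainAlgHom K K (iM n) :
        AddMonoidAlgebra K (Option (Fin n) →₀ ℕ) →ₐ[K] _) :=
    AddMonoidAlgebra.mapDomain_injective (iM_inj n)
  exact h1.comp (MvPolynomial.optionEquivLeft K (Fin n)).symm.injective




end Main
end SpecialFiberAux

/-- Special fiber rings of an `a`-determined monomial ideal generated in one degree and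
of its `a`-dual are isomorphic: the toric algebras `K[f_1 t,…,f_ν t]` and
`K[\hat f_1 t,…,\hat f_ν t]` inside `R[t]` are isomorphic as `K`-algebras via
`f_k t ↦ \hat f_k t`, where `\hat f_k = x^a/f_k`. -/
theorem specialFiber_iso_dual (K : Type*) [Field K] {n ν d : ℕ} (a : Fin n →₀ ℕ)
    (g : Fin ν → (Fin n →₀ ℕ))
    (hdet : ∀ k, g k ≤ a)
    (hdeg : ∀ k, ((g k).sum fun _ e => e) = d) :
    ∃ e : Algebra.adjoin K
            (Set.range fun k : Fin ν =>
              (Polynomial.C (monomial (g k) (1 : K)) * Polynomial.X :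
                Polynomial (MvPolynomial (Fin n) K))) ≃ₐ[K]
          Algebra.adjoin K
            (Set.range fun k : Fin ν =>
              (Polynomial.C (monomial (a - g k) (1 : K)) * Polynomial.X :
                Polynomial (MvPolynomial (Fin n) K))),
      ∀ k : Fin ν,
        (e ⟨Polynomial.C (monomial (g k) (1 : K)) * Polynomial.X,
              Algebra.subset_adjoin (Set.mem_range_self k)⟩ :
            Polynomial (MvPolynomial (Fin n) K)) =
          Polynomial.C (monomial (a - g k) (1 : K)) * Polynomial.X := by
  classical
  set gen1 : Fin ν → Polynomial (MvPolynomial (Fin n) K) :=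
    fun k => Polynomial.C (monomial (g k) (1 : K)) * Polynomial.X with hgen1
  set gen2 : Fin ν → Polynomial (MvPolynomial (Fin n) K) :=
    fun k => Polynomial.C (monomial (a - g k) (1 : K)) * Polynomial.X with hgen2
  set σ : AddMonoidAlgebra K ((Fin n →₀ ℤ) × ℕ) ≃ₐ[K] AddMonoidAlgebra K ((Fin n →₀ ℤ) × ℕ) :=
    AddMonoidAlgebra.domCongr K K (tau (ioz n a)) with hσ
  set Φ := Phi K n with hΦdef
  set G : Polynomial (MvPolynomial (Fin n) K) →ₐ[K] AddMonoidAlgebra K ((Fin n →₀ ℤ) × ℕ) :=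
    σ.toAlgHom.comp Φ with hGdef
  have hΦ : Function.Injective Φ := Phi_inj K
  have hG : Function.Injective G := σ.injective.comp hΦ
  have hkey : ∀ k, G (gen1 k) = Φ (gen2 k) := by
    intro k
    have : G (gen1 k) = σ (Φ (gen1 k)) := rfl
    rw [this, hgen1, hΦdef]
    simp only []
    rw [Phi_gen, hσ, AddMonoidAlgebra.domCongr_single, tau_gen (hdet k)]
    rw [hgen2, ← Phi_gen]
  set A₁ := Algebra.adjoin K (Set.range gen1) with hA₁
  set A₂ := Algebra.adjoin K (Set.range gen2) with hA₂
  have hmap : A₁.map G = A₂.map Φ := by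
    rw [hA₁, hA₂, AlgHom.map_adjoin, AlgHom.map_adjoin]
    congr 1
    rw [← Set.range_comp, ← Set.range_comp]
    exact congrArg _ (funext hkey)
  refine ⟨(Subalgebra.equivMapOfInjective A₁ G hG).trans
    ((Subalgebra.equivOfEq _ _ hmap).trans
      (Subalgebra.equivMapOfInjective A₂ Φ hΦ).symm), fun k => ?_⟩
  apply hΦ
  set x : A₁ := ⟨gen1 k, Algebra.subset_adjoin (Set.mem_range_self k)⟩ with hx
  set z := Subalgebra.equivOfEq _ _ hmap (Subalgebra.equivMapOfInjective A₁ G hG x) with hz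
  have h1 : Φ ((Subalgebra.equivMapOfInjective A₂ Φ hΦ).symm z : Polynomial (MvPolynomial (Fin n) K))
      = ((Subalgebra.equivMapOfInjective A₂ Φ hΦ) ((Subalgebra.equivMapOfInjective A₂ Φ hΦ).symm z) :
          AddMonoidAlgebra K ((Fin n →₀ ℤ) × ℕ)) := rfl
  rw [AlgEquiv.apply_symm_apply] at h1
  have h2 : (z : AddMonoidAlgebra K ((Fin n →₀ ℤ) × ℕ)) = G (gen1 k) := rfl
  exact h1.trans (h2.trans (hkey k))
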